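/- The function y_{WKB}(t) = (1−t²)^{-1/4} · sin(√λ · g(t)), with g(t) = ½(t√(1−t²) + arcsin t) and λ = 16n² for a positive integer n, tends to 0 as t → 1⁻ despite the factor (1−t²)^{-1/4} diverging; more precisely, sin(√λ g(t)) = O((1−t)^{3/2}) as t → 1⁻, so y_{WKB}(t) = O((1−t)^{5/4}) → 0. -/

import Mathlib

open Real Asymptotics Filter Set

private lemma key_bound_16 (n : ℕ) (g : ℝ → ℝ)
    (hg : ∀ t, g t = (t * Real.sqrt (1 - t ^ 2) + Real.arcsin t) / 2)
    (t : ℝ) (ht1 : Real.cos (1/2) < t) (ht2 : t < 1) :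
    |Real.sin (4 * (n : ℝ) * g t)| ≤
      ((n : ℝ) * π ^ 3 * 2 * Real.sqrt 2) * ((1 - t) * Real.sqrt (1 - t)) := by
  have hpi : (3 : ℝ) < π := Real.pi_gt_three
  have hc : (0 : ℝ) < Real.cos (1/2) :=
    Real.cos_pos_of_mem_Ioo ⟨by linarith, by linarith⟩
  have ht0 : 0 < t := hc.trans ht1
  have hθ0 : 0 < Real.arccos t := Real.arccos_pos.2 ht2
  have hcos : Real.cos (Real.arccos t) = t := Real.cos_arccos (by linarith) ht2.le
  have hθhalf : Real.arccos t < 1/2 := by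
    by_contra h
    push_neg at h
    have := Real.cos_le_cos_of_nonneg_of_le_pi (by norm_num) (Real.arccos_le_pi t) h
    rw [hcos] at this
    linarith
  set x : ℝ := 2 * Real.arccos t with hxdef
  have hx0 : 0 < x := by positivity
  have hx1 : x ≤ 1 := by simp only [hxdef]; linarith
  have hsinθ : Real.sin (Real.arccos t) = Real.sqrt (1 - t ^ 2) := Real.sin_arccos t
  -- 4 * g t = π - (x - sin x)
  have hgt : 4 * g t = π - (x - Real.sin x) := by
    have harcsin : Real.arcsin t = π / 2 - Real.arccos t :=
      Real.arcsin_eq_pi_div_two_sub_arccos t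
    have hsin2 : Real.sin x = 2 * Real.sin (Real.arccos t) * Real.cos (Real.arccos t) :=
      Real.sin_two_mul _
    rw [hg t, harcsin, hxdef]
    rw [hxdef] at hsin2
    rw [hsin2, hsinθ, hcos]
    ring
  have h4n : 4 * (n : ℝ) * g t = (n : ℝ) * π - (n : ℝ) * (x - Real.sin x) := by
    have : 4 * (n : ℝ) * g t = (n : ℝ) * (4 * g t) := by ring
    rw [this, hgt]; ring
  have hsinx_lt : Real.sin x < x := Real.sin_lt hx0
  have hcube : x - x ^ 3 / 4 < Real.sin x := by
    have := Real.sin_gt_sub_cube hx0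
    linarith [pow_pos hx0 3]
  -- |sin(4n g t)| ≤ n (x - sin x)
  have habs : |Real.sin (4 * (n : ℝ) * g t)| ≤ (n : ℝ) * (x - Real.sin x) := by
    rw [h4n, Real.sin_nat_mul_pi_sub]
    rw [abs_neg, abs_mul]
    calc |(-1 : ℝ) ^ n| * |Real.sin ((n : ℝ) * (x - Real.sin x))|
        ≤ 1 * |(n : ℝ) * (x - Real.sin x)| := by
          apply mul_le_mul _ (Real.abs_sin_le_abs) (abs_nonneg _) zero_le_one
          rw [abs_pow, abs_neg, abs_one, one_pow]
      _ = (n : ℝ) * (x - Real.sin x) := by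
          rw [one_mul, abs_of_nonneg]
          have : 0 ≤ x - Real.sin x := by linarith
          positivity
  -- bound on x
  have hxle : x ≤ π * Real.sqrt (1 - t ^ 2) := by
    have hθpi2 : Real.arccos t ≤ π / 2 := by linarith
    have := Real.mul_le_sin (Real.arccos_nonneg t) hθpi2
    rw [hsinθ] at this
    have hπ0 : (0 : ℝ) < π := by linarith
    rw [hxdef]
    rw [div_mul_eq_mul_div, div_le_iff₀ hπ0] at this
    linarith
  have hsqrtle : Real.sqrt (1 - t ^ 2) ≤ Real.sqrt 2 * Real.sqrt (1 - t) := by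
    rw [← Real.sqrt_mul (by norm_num)]
    apply Real.sqrt_le_sqrt
    nlinarith
  have hx_le2 : x ≤ π * (Real.sqrt 2 * Real.sqrt (1 - t)) := by
    refine hxle.trans ?_
    have hπ0 : (0 : ℝ) < π := by linarith
    nlinarith
  -- cube
  have hs0 : 0 ≤ Real.sqrt (1 - t) := Real.sqrt_nonneg _
  have hs2 : Real.sqrt (1 - t) * Real.sqrt (1 - t) = 1 - t :=
    Real.mul_self_sqrt (by linarith)
  have hsq2 : Real.sqrt 2 * Real.sqrt 2 = 2 := Real.mul_self_sqrt (by norm_num)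
  have hsq2pos : (0 : ℝ) < Real.sqrt 2 := by positivity
  have hx3 : x ^ 3 ≤ π ^ 3 * (2 * Real.sqrt 2) * ((1 - t) * Real.sqrt (1 - t)) := by
    have h1 : x ^ 3 ≤ (π * (Real.sqrt 2 * Real.sqrt (1 - t))) ^ 3 := by
      apply pow_le_pow_left₀ hx0.le hx_le2
    refine h1.trans_eq ?_
    have ha : Real.sqrt 2 ^ 3 = 2 * Real.sqrt 2 := by
      rw [pow_succ, sq, hsq2]
    have hb : Real.sqrt (1 - t) ^ 3 = (1 - t) * Real.sqrt (1 - t) := by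
      rw [pow_succ, sq, hs2]
    rw [mul_pow, mul_pow, ha, hb]
    ring
  have hn0 : (0 : ℝ) ≤ (n : ℝ) := Nat.cast_nonneg n
  calc |Real.sin (4 * (n : ℝ) * g t)| ≤ (n : ℝ) * (x - Real.sin x) := habs
    _ ≤ (n : ℝ) * (x ^ 3 / 4) := by
        apply mul_le_mul_of_nonneg_left (by linarith) hn0
    _ ≤ (n : ℝ) * (π ^ 3 * (2 * Real.sqrt 2) * ((1 - t) * Real.sqrt (1 - t))) := by
        apply mul_le_mul_of_nonneg_left _ hn0
        nlinarith
    _ = ((n : ℝ) * π ^ 3 * 2 * Real.sqrt 2) * ((1 - t) * Real.sqrt (1 - t)) := by ring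

open Real Asymptotics Filter in
theorem stmt_16 (n : ℕ) (hn : 1 ≤ n) (lam : ℝ) (hlam : lam = 16 * (n : ℝ) ^ 2)
    (g : ℝ → ℝ)
    (hg : ∀ t, g t = (t * sqrt (1 - t ^ 2) + arcsin t) / 2) :
    (fun t => Real.sin (sqrt lam * g t)) =O[nhdsWithin 1 (Set.Iio 1)]
      (fun t => (1 - t) ^ (3 / 2 : ℝ)) ∧
    (fun t => (1 - t ^ 2) ^ (-(1 / 4) : ℝ) * Real.sin (sqrt lam * g t))
        =O[nhdsWithin 1 (Set.Iio 1)] (fun t => (1 - t) ^ (5 / 4 : ℝ)) ∧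
    Tendsto (fun t => (1 - t ^ 2) ^ (-(1 / 4) : ℝ) * Real.sin (sqrt lam * g t))
      (nhdsWithin 1 (Set.Iio 1)) (nhds 0) := by
  have hpi : (3 : ℝ) < π := Real.pi_gt_three
  have hc : (0 : ℝ) < Real.cos (1/2) :=
    Real.cos_pos_of_mem_Ioo ⟨by linarith, by linarith⟩
  have hc1 : Real.cos (1/2) < 1 := by
    have := Real.cos_lt_cos_of_nonneg_of_le_pi (le_refl 0) (by linarith : (1:ℝ)/2 ≤ π)
      (by norm_num : (0:ℝ) < 1/2)
    rwa [Real.cos_zero] at this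
  have hmem : Set.Ioo (Real.cos (1/2)) 1 ∈ nhdsWithin (1:ℝ) (Set.Iio 1) :=
    Ioo_mem_nhdsLT_of_mem ⟨hc1, le_refl 1⟩
  have hsqrt : Real.sqrt lam = 4 * (n : ℝ) := by
    rw [hlam, show (16 : ℝ) * (n : ℝ) ^ 2 = (4 * (n : ℝ)) ^ 2 by ring,
      Real.sqrt_sq (by positivity)]
  set C : ℝ := (n : ℝ) * π ^ 3 * 2 * Real.sqrt 2 with hC
  -- key pointwise estimate restated with rpow
  have hkey : ∀ t ∈ Set.Ioo (Real.cos (1/2)) 1,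
      |Real.sin (Real.sqrt lam * g t)| ≤ C * (1 - t) ^ (3 / 2 : ℝ) := by
    intro t ht
    have h1t : 0 < 1 - t := by linarith [ht.2]
    have hrpow : (1 - t) ^ (3 / 2 : ℝ) = (1 - t) * Real.sqrt (1 - t) := by
      rw [show (3 / 2 : ℝ) = 1 + 1/2 by norm_num, Real.rpow_add h1t, Real.rpow_one,
        ← Real.sqrt_eq_rpow]
    rw [hsqrt, hrpow]
    exact key_bound_16 n g hg t ht.1 ht.2
  have hO1 : (fun t => Real.sin (Real.sqrt lam * g t)) =O[nhdsWithin 1 (Set.Iio 1)]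
      (fun t => (1 - t) ^ (3 / 2 : ℝ)) := by
    rw [isBigO_iff]
    refine ⟨C, ?_⟩
    filter_upwards [hmem] with t ht
    have h1t : 0 < 1 - t := by linarith [ht.2]
    rw [Real.norm_eq_abs, Real.norm_eq_abs, abs_of_nonneg (Real.rpow_nonneg h1t.le _)]
    exact hkey t ht
  have hO2 : (fun t => (1 - t ^ 2) ^ (-(1 / 4) : ℝ) * Real.sin (Real.sqrt lam * g t))
      =O[nhdsWithin 1 (Set.Iio 1)] (fun t => (1 - t) ^ (5 / 4 : ℝ)) := by
    rw [isBigO_iff]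
    refine ⟨C, ?_⟩
    filter_upwards [hmem] with t ht
    have ht0 : 0 < t := hc.trans ht.1
    have h1t : 0 < 1 - t := by linarith [ht.2]
    have h1t2 : 0 < 1 - t ^ 2 := by nlinarith [ht.2]
    have hle : 1 - t ≤ 1 - t ^ 2 := by nlinarith [ht.2]
    have hmono : (1 - t ^ 2) ^ (-(1 / 4) : ℝ) ≤ (1 - t) ^ (-(1 / 4) : ℝ) :=
      Real.rpow_le_rpow_of_nonpos h1t hle (by norm_num)
    have hnn : (0 : ℝ) ≤ (1 - t ^ 2) ^ (-(1 / 4) : ℝ) := Real.rpow_nonneg h1t2.le _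
    rw [Real.norm_eq_abs, Real.norm_eq_abs, abs_mul,
      abs_of_nonneg hnn, abs_of_nonneg (Real.rpow_nonneg h1t.le ((5:ℝ)/4))]
    calc (1 - t ^ 2) ^ (-(1 / 4) : ℝ) * |Real.sin (Real.sqrt lam * g t)|
        ≤ (1 - t) ^ (-(1 / 4) : ℝ) * (C * (1 - t) ^ (3 / 2 : ℝ)) := by
          apply mul_le_mul hmono (hkey t ht) (abs_nonneg _) (Real.rpow_nonneg h1t.le _)
      _ = C * (1 - t) ^ (5 / 4 : ℝ) := by
          rw [← mul_assoc, mul_comm ((1 - t) ^ (-(1 / 4) : ℝ)) C, mul_assoc,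
            ← Real.rpow_add h1t]
          norm_num
  have htend : Tendsto (fun t : ℝ => (1 - t) ^ (5 / 4 : ℝ))
      (nhdsWithin 1 (Set.Iio 1)) (nhds 0) := by
    have h1 : Tendsto (fun t : ℝ => 1 - t) (nhdsWithin 1 (Set.Iio 1)) (nhds 0) := by
      have h0 : Tendsto (fun t : ℝ => 1 - t) (nhds 1) (nhds (1 - 1)) :=
        tendsto_const_nhds.sub tendsto_id
      norm_num at h0
      exact h0.mono_left nhdsWithin_le_nhds
    have h2 : ContinuousAt (fun u : ℝ => u ^ (5 / 4 : ℝ)) 0 :=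
      Real.continuousAt_rpow_const 0 _ (Or.inr (by norm_num))
    have h3 := h2.tendsto.comp h1
    simpa [Function.comp_def, Real.zero_rpow (by norm_num : (5/4 : ℝ) ≠ 0)] using h3
  exact ⟨hO1, hO2, hO2.trans_tendsto htend⟩
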